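/- With v̄(a,θ) = θ·a^{1−α}, suppose all agents' true valuations have a common derivative value v'(1/n) at the equal-split allocation. Then the symmetric Nash equilibrium bid is μ_NE = v'(1/n)/((1−α)·n^α) for each agent, the equilibrium Clarke surplus is p_S(μ_NE·eₙ) = μ_NE·n^α·(n(1−1/n)^α − (n−1)) ≤ v'(1/n), and the equilibrium optimal welfare is σ_S(μ_NE·eₙ) = v'(1/n)/(1−α). -/

import Mathlib

/-- symmetric Nash equilibrium quantities for v̄(a,θ) = θ·a^{1−α}
when all agents have a common marginal valuation V = v'(1/n) at the equal split:
the equilibrium bid μ = V/((1−α)n^α) satisfies the equilibrium condition,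
p_S(μ·eₙ) = μ·n^α·(n(1−1/n)^α − (n−1)) ≤ V, and σ_S(μ·eₙ) = V/(1−α). -/
theorem symmetric_NE_values {n : ℕ} (hn : 2 ≤ n)
    (α V : ℝ) (hα : α ∈ Set.Ioo (0:ℝ) 1) (hV : 0 < V)
    (μ : ℝ) (hμ : μ = V / ((1 - α) * (n : ℝ) ^ α))
    (σS pS : (Fin n → ℝ) → ℝ)
    (hσS : ∀ θ, σS θ = (∑ i, θ i ^ (α⁻¹)) ^ α)
    (hpS : ∀ θ, pS θ = ∑ j, (∑ i ∈ Finset.univ.erase j, θ i ^ (α⁻¹)) ^ α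
        - ((n : ℝ) - 1) * σS θ) :
    (1 - α) * μ / ((1 / (n : ℝ)) ^ α) = V ∧
    pS (fun _ => μ) = μ * (n : ℝ) ^ α * ((n : ℝ) * (1 - 1 / (n : ℝ)) ^ α - ((n : ℝ) - 1)) ∧
    pS (fun _ => μ) ≤ V ∧
    σS (fun _ => μ) = V / (1 - α) := by
  obtain ⟨hα0, hα1⟩ := hα
  have hn0 : (0:ℝ) < (n:ℝ) := by positivity
  have hn2 : (2:ℝ) ≤ (n:ℝ) := by exact_mod_cast hn
  have hnpow : (0:ℝ) < (n:ℝ) ^ α := Real.rpow_pos_of_pos hn0 α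
  have h1α : (0:ℝ) < 1 - α := by linarith
  have hμ0 : 0 < μ := by rw [hμ]; positivity
  have hμinv : (μ ^ (α⁻¹)) ^ α = μ := by
    rw [← Real.rpow_mul hμ0.le, inv_mul_cancel₀ (ne_of_gt hα0), Real.rpow_one]
  have hn1 : (0:ℝ) ≤ (n:ℝ) - 1 := by linarith
  -- σS value
  have hσ : σS (fun _ => μ) = (n:ℝ) ^ α * μ := by
    rw [hσS]
    have : (∑ _i : Fin n, μ ^ (α⁻¹)) = (n:ℝ) * μ ^ (α⁻¹) := by
      simp [Finset.sum_const, mul_comm]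
    rw [this, Real.mul_rpow hn0.le (Real.rpow_nonneg hμ0.le _), hμinv]
  -- erase value
  have hσone : (1/(n:ℝ))^α = 1/(n:ℝ)^α := by
    rw [Real.div_rpow zero_le_one hn0.le, Real.one_rpow]
  have herase : ∀ j : Fin n,
      (∑ i ∈ Finset.univ.erase j, (fun _ : Fin n => μ) i ^ (α⁻¹)) ^ α
        = ((n:ℝ) - 1) ^ α * μ := by
    intro j
    have hcard : (Finset.univ.erase j).card = n - 1 := by
      rw [Finset.card_erase_of_mem (Finset.mem_univ j), Finset.card_univ, Fintype.card_fin]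
    have : (∑ _i ∈ Finset.univ.erase j, μ ^ (α⁻¹)) = ((n:ℝ) - 1) * μ ^ (α⁻¹) := by
      rw [Finset.sum_const, hcard, nsmul_eq_mul]
      congr 1
      have : (1:ℕ) ≤ n := by omega
      push_cast [Nat.cast_sub this]
      ring
    rw [this, Real.mul_rpow hn1 (Real.rpow_nonneg hμ0.le _), hμinv]
  have hp : pS (fun _ => μ) = (n:ℝ) * (((n:ℝ) - 1) ^ α * μ) - ((n:ℝ) - 1) * ((n:ℝ)^α * μ) := by
    rw [hpS, hσ]
    rw [Finset.sum_congr rfl (fun j _ => herase j)]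
    simp [Finset.sum_const, mul_comm]
  -- goal 2 RHS equals hp RHS
  have hfrac : (1 - 1/(n:ℝ)) ^ α = ((n:ℝ) - 1) ^ α / (n:ℝ) ^ α := by
    rw [← Real.div_rpow hn1 hn0.le]
    congr 1
    field_simp
  refine ⟨?_, ?_, ?_, ?_⟩
  · rw [hσone, hμ]
    field_simp
  · rw [hp, hfrac]
    field_simp
  · -- Bernoulli: (1 - 1/n)^α ≤ 1 - α/n
    have hb : (1 - 1/(n:ℝ)) ^ α ≤ 1 + α * (-(1/(n:ℝ))) := by
      have := rpow_one_add_le_one_add_mul_self (s := -(1/(n:ℝ)))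
        (by have h1n : 1/(n:ℝ) ≤ 1 := by rw [div_le_one hn0]; linarith
            linarith) hα0.le hα1.le
      simpa [sub_eq_add_neg] using this
    have hVeq : V = (1 - α) * μ * (n:ℝ)^α := by
      rw [hμ]; field_simp
    rw [hp]
    have key : (n:ℝ) * (1 - 1/(n:ℝ)) ^ α ≤ (n:ℝ) - α := by
      have := mul_le_mul_of_nonneg_left hb hn0.le
      calc (n:ℝ) * (1 - 1/(n:ℝ)) ^ α ≤ (n:ℝ) * (1 + α * (-(1/(n:ℝ)))) := this
        _ = (n:ℝ) - α := by field_simp; ring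
    have h2 : (n:ℝ) * (((n:ℝ) - 1) ^ α * μ) = μ * (n:ℝ)^α * ((n:ℝ) * (1 - 1/(n:ℝ))^α) := by
      rw [hfrac]; field_simp
    rw [h2, hVeq]
    nlinarith [mul_pos hμ0 hnpow]
  · rw [hσ, hμ]
    field_simp
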